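/- Let L/K be a finite Galois extension of fields. Then the tame locus, namely the set of all O ∈ Val(L) such that either the residue field κ(O) has characteristic 0, or char κ(O) = p > 0 and p does not divide the order of the inertia subgroup I_O ≤ Gal(L/K), is an open subset of Val(L) in the Zariski topology. -/

import Mathlib

universe u

/-- The Zariski topology on the space `Val(L)` of all valuation subrings of a field `L`:
it is generated by the subbasic open sets `U_x = {O : x ∈ O}` for `x ∈ L`. -/
def zariskiTopology (L : Type u) [Field L] : TopologicalSpace (ValuationSubring L) :=
  TopologicalSpace.generateFrom
    {U | ∃ x : L, U = {O : ValuationSubring L | x ∈ O}}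

/-- The inertia subgroup of `Gal(L/K)` at a valuation subring `O` of `L`: the set of those
`g` with `g(O) = O` inducing the identity automorphism on the residue field `κ(O)`, i.e.
such that for every `x ∈ O` the element `g x - x` lies in the maximal ideal of `O` (it
belongs to `O` and is not a unit of `O`). -/
def inertiaSet (K : Type u) {L : Type u} [Field K] [Field L] [Algebra K L]
    (O : ValuationSubring L) : Set (L ≃ₐ[K] L) :=
  {g | (∀ x : L, x ∈ O ↔ g x ∈ O) ∧
    ∀ x ∈ O, ∀ z ∈ O, (g x - x) * z ≠ 1}

section Aux

variable {K L : Type u} [Field K] [Field L] [Algebra K L]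

/-- `y` belongs to the maximal ideal of `O`: it is a member and a non-unit. -/
def MmI (O : ValuationSubring L) (y : L) : Prop := y ∈ O ∧ ∀ z ∈ O, y * z ≠ 1

lemma mmI_mul {O : ValuationSubring L} {y : L} (hy : MmI O y) {z : L} (hz : z ∈ O) :
    MmI O (y * z) :=
  ⟨mul_mem hy.1 hz, fun w hw hh => hy.2 (z * w) (mul_mem hz hw) (by rw [← mul_assoc]; exact hh)⟩

lemma mmI_add {O : ValuationSubring L} {a b : L} (ha : MmI O a) (hb : MmI O b) :
    MmI O (a + b) := by
  refine ⟨add_mem ha.1 hb.1, fun z hz hh => ?_⟩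
  rcases eq_or_ne a 0 with rfl | ha0
  · exact hb.2 z hz (by simpa using hh)
  rcases eq_or_ne b 0 with rfl | hb0
  · exact ha.2 z hz (by simpa using hh)
  rcases O.mem_or_inv_mem (a / b) with hc | hc
  · refine hb.2 ((a / b + 1) * z) (mul_mem (add_mem hc (one_mem O)) hz) ?_
    have hab : a / b * b = a := div_mul_cancel₀ a hb0
    calc b * ((a / b + 1) * z) = (a / b * b + b) * z := by ring
      _ = (a + b) * z := by rw [hab]
      _ = 1 := hh
  · rw [inv_div] at hc
    refine ha.2 ((b / a + 1) * z) (mul_mem (add_mem hc (one_mem O)) hz) ?_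
    have hba : b / a * a = b := div_mul_cancel₀ b ha0
    calc a * ((b / a + 1) * z) = (b / a * a + a) * z := by ring
      _ = (b + a) * z := by rw [hba]
      _ = 1 := by rw [add_comm]; exact hh

lemma inertia_one (O : ValuationSubring L) : (1 : L ≃ₐ[K] L) ∈ inertiaSet K O :=
  ⟨fun x => by simp, fun x _ z _ hh => by simp at hh⟩

lemma inertia_inv {O : ValuationSubring L} {g : L ≃ₐ[K] L} (hg : g ∈ inertiaSet K O) :
    g⁻¹ ∈ inertiaSet K O := by
  have hinv : ∀ x : L, g⁻¹ x = g.symm x := fun x => rfl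
  constructor
  · intro x
    have h1 := hg.1 (g.symm x)
    rw [AlgEquiv.apply_symm_apply] at h1
    rw [hinv]
    exact h1.symm
  · intro x hx z hz hh
    rw [hinv] at hh
    have hy : g.symm x ∈ O := by
      have h1 := hg.1 (g.symm x)
      rw [AlgEquiv.apply_symm_apply] at h1
      exact h1.2 hx
    refine hg.2 (g.symm x) hy (-z) (neg_mem hz) ?_
    rw [AlgEquiv.apply_symm_apply]
    linear_combination hh

lemma inertia_mul {O : ValuationSubring L} {g h : L ≃ₐ[K] L}
    (hg : g ∈ inertiaSet K O) (hh : h ∈ inertiaSet K O) :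
    g * h ∈ inertiaSet K O := by
  constructor
  · intro x
    rw [AlgEquiv.mul_apply]
    exact (hh.1 x).trans (hg.1 (h x))
  · intro x hx z hz hc
    rw [AlgEquiv.mul_apply] at hc
    have hhx : h x ∈ O := (hh.1 x).1 hx
    have h1 : MmI O (g (h x) - h x) := ⟨sub_mem ((hg.1 (h x)).1 hhx) hhx, hg.2 (h x) hhx⟩
    have h2 : MmI O (h x - x) := ⟨sub_mem hhx hx, hh.2 x hx⟩
    exact (mmI_add h1 h2).2 z hz (by rw [← hc]; ring)

/-- The inertia set as a subgroup. -/
def inertiaGroup (K : Type u) {L : Type u} [Field K] [Field L] [Algebra K L]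
    (O : ValuationSubring L) : Subgroup (L ≃ₐ[K] L) where
  carrier := inertiaSet K O
  one_mem' := inertia_one O
  mul_mem' := inertia_mul
  inv_mem' := inertia_inv

lemma card_inertia (O : ValuationSubring L) :
    Nat.card (inertiaSet K O) = Nat.card (inertiaGroup K O) :=
  Nat.card_congr ⟨fun a => ⟨a.1, a.2⟩, fun a => ⟨a.1, a.2⟩, fun _ => rfl, fun _ => rfl⟩

lemma exists_order_p [Finite (L ≃ₐ[K] L)] {O : ValuationSubring L} {p : ℕ} (hp : p.Prime)
    (hd : p ∣ Nat.card (inertiaSet K O)) : ∃ g ∈ inertiaSet K O, orderOf g = p := by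
  haveI := Fact.mk hp
  haveI : Fintype (inertiaGroup K O) := Fintype.ofFinite _
  rw [card_inertia] at hd
  obtain ⟨x, hx⟩ := exists_prime_orderOf_dvd_card (G := inertiaGroup K O) p
    (by rwa [← Nat.card_eq_fintype_card])
  refine ⟨(x : L ≃ₐ[K] L), x.2, ?_⟩
  rw [← hx]
  exact orderOf_injective (inertiaGroup K O).subtype (Subgroup.subtype_injective _) x

lemma orderOf_dvd_card_inertia {O : ValuationSubring L} {g : L ≃ₐ[K] L}
    (hg : g ∈ inertiaSet K O) : orderOf g ∣ Nat.card (inertiaSet K O) := by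
  rw [card_inertia]
  have h1 := orderOf_dvd_natCard (G := inertiaGroup K O) ⟨g, hg⟩
  have heq : orderOf g = orderOf (⟨g, hg⟩ : inertiaGroup K O) :=
    orderOf_injective (inertiaGroup K O).subtype (Subgroup.subtype_injective _) ⟨g, hg⟩
  rw [heq]
  exact h1

lemma mmI_natCast_iff {O : ValuationSubring L} {n : ℕ} :
    MmI O ((n : L)) ↔ ¬ IsUnit ((n : ℕ) : O) := by
  constructor
  · rintro ⟨-, h2⟩ hu
    obtain ⟨z, hz⟩ := isUnit_iff_exists_inv.1 hu
    apply h2 (z : L) z.2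
    have h3 := congrArg (fun t : O => (t : L)) hz
    push_cast at h3
    exact h3
  · intro hu
    refine ⟨natCast_mem O n, fun z hz hh => hu (isUnit_iff_exists_inv.2 ⟨⟨z, hz⟩, ?_⟩)⟩
    exact Subtype.ext (by push_cast; exact hh)

lemma ringChar_residue_iff {O : ValuationSubring L} {p : ℕ} (hp : p.Prime) :
    ringChar (IsLocalRing.ResidueField O) = p ↔ MmI O ((p : L)) := by
  have hres : (IsLocalRing.residue O) ((p : ℕ) : O) = ((p : ℕ) : IsLocalRing.ResidueField O) :=
    map_natCast _ p
  have key : ((p : ℕ) : IsLocalRing.ResidueField O) = 0 ↔ MmI O ((p : L)) := by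
    rw [← hres, IsLocalRing.residue_eq_zero_iff, IsLocalRing.mem_maximalIdeal,
      mem_nonunits_iff, mmI_natCast_iff]
  constructor
  · intro h
    exact key.1 (by rw [← h]; exact ringChar.Nat.cast_ringChar)
  · intro h
    have h0 : ((p : ℕ) : IsLocalRing.ResidueField O) = 0 := key.2 h
    have hdvd : ringChar (IsLocalRing.ResidueField O) ∣ p := (ringChar.spec _ p).1 h0
    rcases hp.eq_one_or_self_of_dvd _ hdvd with h1 | h1
    · exfalso
      have h2 : ((1 : ℕ) : IsLocalRing.ResidueField O) = 0 :=
        (ringChar.spec _ 1).2 (h1 ▸ dvd_refl _)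
      simp at h2
    · exact h1

/-- Anti-monotonicity of the inertia condition: if `O ⊆ O'` and `g` is inertial at `O'`,
then `g` is inertial at `O`. -/
lemma inertia_anti {O O' : ValuationSubring L} (h : ∀ x : L, x ∈ O → x ∈ O')
    {g : L ≃ₐ[K] L} (hg : g ∈ inertiaSet K O') : g ∈ inertiaSet K O := by
  have hm : ∀ y : L, MmI O' y → MmI O y := by
    intro y hy
    rcases eq_or_ne y 0 with rfl | hy0
    · exact ⟨O.zero_mem, fun z hz hh => by simp at hh⟩
    have hyinv : y⁻¹ ∉ O' := fun hv => hy.2 y⁻¹ hv (mul_inv_cancel₀ hy0)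
    have hyO : y ∈ O := (O.mem_or_inv_mem y).resolve_right (fun hv => hyinv (h _ hv))
    exact ⟨hyO, fun z hz => hy.2 z (h z hz)⟩
  have fwd : ∀ g' : L ≃ₐ[K] L, g' ∈ inertiaSet K O' → ∀ x : L, x ∈ O → g' x ∈ O := by
    intro g' hg' x hx
    by_contra hgx
    have hx' : x ∈ O' := h x hx
    have hgx' : g' x ∈ O' := (hg'.1 x).1 hx'
    have hne : g' x ≠ 0 := fun h0 => hgx (h0 ▸ O.zero_mem)
    have hu : (g' x)⁻¹ ∈ O := (O.mem_or_inv_mem (g' x)).resolve_left hgx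
    have humm : MmI O ((g' x)⁻¹) := by
      refine ⟨hu, fun z hz hh => hgx ?_⟩
      have hz' : z = g' x := by
        have h3 : g' x * ((g' x)⁻¹ * z) = g' x * 1 := by rw [hh]
        rwa [← mul_assoc, mul_inv_cancel₀ hne, one_mul, mul_one] at h3
      exact hz' ▸ hz
    have hd : MmI O' (g' x - x) := ⟨sub_mem hgx' hx', hg'.2 x hx'⟩
    have h1 : MmI O ((g' x - x) * (g' x)⁻¹) := hm _ (mmI_mul hd (h _ hu))
    have h2 : MmI O ((g' x)⁻¹ * x) := mmI_mul humm hx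
    have hsum := mmI_add h1 h2
    have heq : (g' x - x) * (g' x)⁻¹ + (g' x)⁻¹ * x = 1 := by
      field_simp
      ring
    rw [heq] at hsum
    exact hsum.2 1 (one_mem O) (mul_one 1)
  refine ⟨fun x => ⟨fwd g hg x, fun hgx => ?_⟩, fun x hx z hz => hg.2 x (h x hx) z (h z hz)⟩
  have h1 := fwd g⁻¹ (inertia_inv hg) (g x) hgx
  have h2 : g⁻¹ (g x) = x := g.symm_apply_apply x
  rwa [h2] at h1

end Aux

/-- let `L/K` be a finite Galois extension of fields. Then the tame locus,
namely the set of all `O ∈ Val(L)` such that either the residue field `κ(O)` has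
characteristic `0`, or `char κ(O) = p > 0` and `p` does not divide the order of the
inertia subgroup `I_O ≤ Gal(L/K)`, is open in `Val(L)` for the Zariski topology. -/
theorem tame_locus_isOpen {K L : Type u} [Field K] [Field L] [Algebra K L]
    [FiniteDimensional K L] [IsGalois K L] :
    @IsOpen (ValuationSubring L) (zariskiTopology L)
      {O : ValuationSubring L |
        ∀ p : ℕ, p.Prime → ringChar (IsLocalRing.ResidueField O) = p →
          ¬ p ∣ Nat.card (inertiaSet K O)} := by
  classical
  letI : TopologicalSpace (ValuationSubring L) := zariskiTopology L
  set T : Set (ValuationSubring L) :=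
    {O : ValuationSubring L |
      ∀ p : ℕ, p.Prime → ringChar (IsLocalRing.ResidueField O) = p →
        ¬ p ∣ Nat.card (inertiaSet K O)} with hT
  show IsOpen T
  haveI : Finite (L ≃ₐ[K] L) := Finite.of_fintype _
  rw [isOpen_iff_forall_mem_open]
  intro O hO
  -- Step 1: any non-tame valuation subring admits a wild witness of prime order.
  have step1 : ∀ O' : ValuationSubring L, O' ∉ T →
      ∃ g : L ≃ₐ[K] L, (orderOf g).Prime ∧ g ∈ inertiaSet K O' ∧
        MmI O' (((orderOf g : ℕ) : L)) := by
    intro O' hO'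
    rw [hT, Set.mem_setOf_eq] at hO'
    push_neg at hO'
    obtain ⟨p, hp, hchar, hdvd⟩ := hO'
    obtain ⟨g, hgI, hgo⟩ := exists_order_p hp hdvd
    exact ⟨g, hgo ▸ hp, hgI, hgo ▸ ((ringChar_residue_iff hp).1 hchar)⟩
  -- Key: there is a finite subset of O all of whose valuation oversets are tame.
  have key : ∃ S : Finset L, (↑S : Set L) ⊆ (O : Set L) ∧
      ∀ O' : ValuationSubring L, (↑S : Set L) ⊆ (O' : Set L) → O' ∈ T := by
    by_contra hkey
    push_neg at hkey
    -- Pigeonhole: a fixed wild witness g works for arbitrarily large finite subsets of O.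
    have step3 : ∃ g : L ≃ₐ[K] L, (orderOf g).Prime ∧
        ∀ S : Finset L, (↑S : Set L) ⊆ (O : Set L) →
          ∃ O' : ValuationSubring L, (↑S : Set L) ⊆ (O' : Set L) ∧
            g ∈ inertiaSet K O' ∧ MmI O' (((orderOf g : ℕ) : L)) := by
      by_contra hc
      push_neg at hc
      have hc2 : ∀ g : L ≃ₐ[K] L, ∃ S : Finset L, (↑S : Set L) ⊆ (O : Set L) ∧
          ∀ O' : ValuationSubring L, (↑S : Set L) ⊆ (O' : Set L) → (orderOf g).Prime →
            ¬ (g ∈ inertiaSet K O' ∧ MmI O' (((orderOf g : ℕ) : L))) := by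
        intro g
        by_cases hgp : (orderOf g).Prime
        · obtain ⟨S, hS1, hS2⟩ := hc g hgp
          refine ⟨S, hS1, fun O' hsub _ hcon => ?_⟩
          obtain ⟨h1, h2⟩ := hcon
          exact hS2 O' hsub h1 h2
        · exact ⟨∅, by simp, fun O' _ hgp' _ => hgp hgp'⟩
      choose Sg h1 h2 using hc2
      haveI : Fintype (L ≃ₐ[K] L) := Fintype.ofFinite _
      set Sstar : Finset L := Finset.univ.biUnion Sg with hSstar
      have hSsub : (↑Sstar : Set L) ⊆ (O : Set L) := by
        intro x hx
        rw [hSstar, Finset.coe_biUnion] at hx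
        simp only [Set.mem_iUnion] at hx
        obtain ⟨g, -, hg⟩ := hx
        exact h1 g hg
      obtain ⟨O', hsub, hO'T⟩ := hkey Sstar hSsub
      obtain ⟨g, hgp, hgI, hgmm⟩ := step1 O' hO'T
      refine h2 g O' ?_ hgp ⟨hgI, hgmm⟩
      refine Set.Subset.trans ?_ hsub
      exact_mod_cast Finset.coe_subset.2 (Finset.subset_biUnion_of_mem Sg (Finset.mem_univ g))
    -- Step 4: ultrafilter limit of the wild witnesses.
    obtain ⟨g, hgp, hgS⟩ := step3
    choose R hR hRI hRmm using fun S : Finset {y : L // y ∈ O} =>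
      hgS (S.image (fun a : {y : L // y ∈ O} => (a : L))) (by
        intro x hx
        rw [Finset.coe_image] at hx
        obtain ⟨a, -, rfl⟩ := hx
        exact a.2)
    let U : Ultrafilter (Finset {y : L // y ∈ O}) := Ultrafilter.of Filter.atTop
    have hmem : ∀ {x : L}, x ∈ O → ∀ᶠ S in (U : Filter (Finset {y : L // y ∈ O})), x ∈ R S := by
      intro x hx
      apply Filter.Eventually.filter_mono (Ultrafilter.of_le _)
      filter_upwards [Filter.eventually_ge_atTop ({(⟨x, hx⟩ : {y : L // y ∈ O})} : Finset {y : L // y ∈ O})] with S hS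
      refine hR S ?_
      simp only [Finset.coe_image, Set.mem_image, Finset.mem_coe]
      exact ⟨⟨x, hx⟩, hS (Finset.mem_singleton_self _), rfl⟩
    set Od : ValuationSubring L :=
      { carrier := {x : L | ∀ᶠ S in (U : Filter (Finset {y : L // y ∈ O})), x ∈ R S}
        zero_mem' := Filter.Eventually.of_forall fun S => (R S).zero_mem
        one_mem' := Filter.Eventually.of_forall fun S => (R S).one_mem
        add_mem' := fun hx hy => (hx.and hy).mono fun S hS => add_mem hS.1 hS.2
        mul_mem' := fun hx hy => (hx.and hy).mono fun S hS => mul_mem hS.1 hS.2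
        neg_mem' := fun hx => hx.mono fun S hS => neg_mem hS
        mem_or_inv_mem' := fun x => by
          by_cases hx : ∀ᶠ S in (U : Filter (Finset {y : L // y ∈ O})), x ∈ R S
          · exact Or.inl hx
          · refine Or.inr ?_
            have hx' : ∀ᶠ S in (U : Filter (Finset {y : L // y ∈ O})), x ∉ R S :=
              Ultrafilter.eventually_not.2 hx
            exact hx'.mono fun S hS => ((R S).mem_or_inv_mem x).resolve_left hS } with hOd
    have hsubOd : ∀ x : L, x ∈ O → x ∈ Od := fun x hx => hmem hx
    have hIOd : g ∈ inertiaSet K Od := by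
      constructor
      · intro x
        exact Filter.eventually_congr (Filter.Eventually.of_forall fun S => (hRI S).1 x)
      · intro x hx z hz hh
        have hx' : ∀ᶠ S in (U : Filter (Finset {y : L // y ∈ O})), x ∈ R S := hx
        have hz' : ∀ᶠ S in (U : Filter (Finset {y : L // y ∈ O})), z ∈ R S := hz
        obtain ⟨S, hxS, hzS⟩ := (hx'.and hz').exists
        exact (hRI S).2 x hxS z hzS hh
    have hmmOd : MmI Od (((orderOf g : ℕ) : L)) := by
      refine ⟨hsubOd _ (natCast_mem O (orderOf g)), fun z hz hh => ?_⟩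
      have hz' : ∀ᶠ S in (U : Filter (Finset {y : L // y ∈ O})), z ∈ R S := hz
      obtain ⟨S, hzS⟩ := hz'.exists
      exact (hRmm S).2 z hzS hh
    -- transfer back to O, contradicting tameness of O
    have hIO : g ∈ inertiaSet K O := inertia_anti hsubOd hIOd
    have hmmO : MmI O (((orderOf g : ℕ) : L)) :=
      ⟨natCast_mem O (orderOf g), fun z hz hh => hmmOd.2 z (hsubOd z hz) hh⟩
    have hchar : ringChar (IsLocalRing.ResidueField O) = orderOf g :=
      (ringChar_residue_iff hgp).2 hmmO
    have hdvd : orderOf g ∣ Nat.card (inertiaSet K O) := orderOf_dvd_card_inertia hIO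
    rw [hT, Set.mem_setOf_eq] at hO
    exact hO (orderOf g) hgp hchar hdvd
  obtain ⟨S, hSO, hS⟩ := key
  refine ⟨⋂ x ∈ S, {O' : ValuationSubring L | x ∈ O'}, ?_, ?_, ?_⟩
  · intro O' hO'
    exact hS O' (fun x hx => Set.mem_iInter₂.1 hO' x hx)
  · exact isOpen_biInter_finset fun x _ =>
      TopologicalSpace.GenerateOpen.basic _ ⟨x, rfl⟩
  · exact Set.mem_iInter₂.2 fun x hx => hSO hx
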